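/- Boundedness of the candidate inverse: under the hypotheses r_{2n+1} ≥ η > 0, |p_n|, |q_{2n+1}|, |r_n| ≤ M, and D_n ≤ -ε for all n, all six sequences ρ_{2n}, π_{2n}, π_{2n+1}, σ_{2n}, σ_{2n+1} defined by the explicit formulas are uniformly bounded by a constant depending only on M, η, ε; consequently the pentadiagonal operator B = S²P + SΠ + Σ + ΠS^{-1} + PS^{-2} is a bounded operator on ℓ²(ℤ) with ‖B‖ ≤ 5·C(M,η,ε). -/

import Mathlib

open ENNReal

private lemma smp_aux_sum (f : lp (fun _ : ℤ => ℂ) 2) (c : ℤ → ℝ) (C : ℝ)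
    (hc : ∀ n, |c n| ≤ C) (k : ℤ) (s : Finset ℤ) :
    ∑ n ∈ s, ‖(c n : ℂ) * f (n + k)‖ ^ (2 : ℝ≥0∞).toReal
      ≤ (C * ‖f‖) ^ (2 : ℝ≥0∞).toReal := by
  have hC : 0 ≤ C := le_trans (abs_nonneg _) (hc 0)
  have h2 : (2 : ℝ≥0∞).toReal = (2 : ℝ) := by norm_num
  have hpow : ∀ x : ℝ, x ^ (2 : ℝ) = x ^ 2 := fun x => by
    rw [show (2 : ℝ) = ((2 : ℕ) : ℝ) by norm_num, Real.rpow_natCast]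
  simp only [h2, hpow]
  calc ∑ n ∈ s, ‖(c n : ℂ) * f (n + k)‖ ^ 2
      ≤ ∑ n ∈ s, C ^ 2 * ‖f (n + k)‖ ^ 2 := by
        refine Finset.sum_le_sum fun n _ => ?_
        rw [norm_mul, Complex.norm_real, mul_pow, Real.norm_eq_abs]
        gcongr
        exact hc n
    _ = C ^ 2 * ∑ n ∈ s, ‖f (n + k)‖ ^ 2 := by rw [Finset.mul_sum]
    _ = C ^ 2 * ∑ m ∈ s.image (· + k), ‖f m‖ ^ 2 := by
        rw [Finset.sum_image (by intro a _ b _ h; dsimp only at h; omega)]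
    _ ≤ C ^ 2 * ‖f‖ ^ 2 := by
        gcongr
        have := lp.sum_rpow_le_norm_rpow (p := 2) (by norm_num) f (s.image (· + k))
        simpa only [h2, hpow] using this
    _ = (C * ‖f‖) ^ 2 := by ring

private lemma smp_aux_mem (f : lp (fun _ : ℤ => ℂ) 2) (c : ℤ → ℝ) (C : ℝ)
    (hc : ∀ n, |c n| ≤ C) (k : ℤ) :
    Memℓp (fun n : ℤ => (c n : ℂ) * f (n + k)) 2 :=
  memℓp_gen' (fun s => smp_aux_sum f c C hc k s)

private lemma smp_aux_norm (f : lp (fun _ : ℤ => ℂ) 2) (c : ℤ → ℝ) (C : ℝ)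
    (hc : ∀ n, |c n| ≤ C) (k : ℤ) (g : lp (fun _ : ℤ => ℂ) 2)
    (hg : ∀ n, g n = (c n : ℂ) * f (n + k)) : ‖g‖ ≤ C * ‖f‖ := by
  have hC : 0 ≤ C := le_trans (abs_nonneg _) (hc 0)
  refine lp.norm_le_of_forall_sum_le (by norm_num) (mul_nonneg hC (norm_nonneg _)) fun s => ?_
  calc ∑ n ∈ s, ‖g n‖ ^ (2 : ℝ≥0∞).toReal
      = ∑ n ∈ s, ‖(c n : ℂ) * f (n + k)‖ ^ (2 : ℝ≥0∞).toReal := by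
        exact Finset.sum_congr rfl fun n _ => by rw [hg n]
    _ ≤ _ := smp_aux_sum f c C hc k s



/-- Boundedness of the candidate inverse: all inverse-coefficient sequences are
uniformly bounded by a constant `C = C(M, η, ε)`, and any pentadiagonal operator `B`
on `ℓ²(ℤ)` realizing them satisfies `‖B‖ ≤ 5 C`. -/
theorem smp_candidate_inverse_bounded
    (p q r ρ π σ D : ℤ → ℝ) (M η ε : ℝ) (hη : 0 < η) (hε : 0 < ε)
    (hbp : ∀ n : ℤ, |p n| ≤ M) (hbq : ∀ n : ℤ, |q (2 * n + 1)| ≤ M)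
    (hbr : ∀ n : ℤ, |r n| ≤ M)
    (hre : ∀ n : ℤ, r (2 * n) = 0) (hro : ∀ n : ℤ, η ≤ r (2 * n + 1))
    (hq : ∀ n : ℤ, q (2 * n) = p (2 * n) * p (2 * n + 1) / r (2 * n + 1))
    (hD : ∀ n : ℤ, D n = q (2 * n - 1) * p (2 * n - 2) * p (2 * n + 1)
      - p (2 * n - 2) * p (2 * n) * r (2 * n + 1)
      - p (2 * n - 1) * p (2 * n + 1) * r (2 * n - 1))
    (hDneg : ∀ n : ℤ, D n ≤ -ε)
    (hρo : ∀ n : ℤ, ρ (2 * n + 1) = 0)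
    (hρe : ∀ n : ℤ, ρ (2 * n) = r (2 * n - 1) * r (2 * n + 1) / D n)
    (hπo : ∀ n : ℤ, π (2 * n + 1) = -(p (2 * n + 3) * ρ (2 * n + 2)) / r (2 * n + 3))
    (hπe : ∀ n : ℤ, π (2 * n) = -(p (2 * n - 2) * ρ (2 * n)) / r (2 * n - 1))
    (hσo : ∀ n : ℤ, σ (2 * n + 1) =
      p (2 * n) * p (2 * n + 3) * ρ (2 * n + 2) / (r (2 * n + 1) * r (2 * n + 3)))
    (hσe : ∀ n : ℤ, σ (2 * n) =
      -(p (2 * n) * (π (2 * n + 1) * r (2 * n + 1) + q (2 * n - 1) * π (2 * n)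
          + p (2 * n - 1) * ρ (2 * n))
        + p (2 * n + 1) * (π (2 * n) * r (2 * n + 1) + q (2 * n + 1) * π (2 * n + 1)
          + p (2 * n + 2) * ρ (2 * n + 2))) / (p (2 * n) ^ 2 + p (2 * n + 1) ^ 2)) :
    ∃ C > 0, (∀ n : ℤ, |ρ n| ≤ C ∧ |π n| ≤ C ∧ |σ n| ≤ C) ∧
      ∀ B : lp (fun _ : ℤ => ℂ) 2 →L[ℂ] lp (fun _ : ℤ => ℂ) 2,
        (∀ (f : lp (fun _ : ℤ => ℂ) 2) (n : ℤ),
          (B f) n = (ρ n : ℂ) * f (n - 2) + (π n : ℂ) * f (n - 1) + (σ n : ℂ) * f n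
            + (π (n + 1) : ℂ) * f (n + 1) + (ρ (n + 2) : ℂ) * f (n + 2)) →
        ‖B‖ ≤ 5 * C := by
  -- basic facts
  have hM : η ≤ M := by
    have h1 := hro 0
    have h2 := hbr 1
    norm_num at h1
    exact h1.trans ((le_abs_self _).trans h2)
  have hM0 : 0 < M := lt_of_lt_of_le hη hM
  have habsD : ∀ n : ℤ, ε ≤ |D n| := fun n => by
    have h := hDneg n
    rw [abs_of_nonpos (by linarith)]; linarith
  have hrabs : ∀ n : ℤ, η ≤ |r (2 * n + 1)| := fun n => (hro n).trans (le_abs_self _)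
  have habs_sub : ∀ x y : ℝ, |x - y| ≤ |x| + |y| := fun x y => by
    rw [sub_eq_add_neg]
    exact (abs_add_le _ _).trans (by rw [abs_neg])
  -- constants
  set Cρ := M ^ 2 / ε with hCρ
  have hCρ0 : 0 ≤ Cρ := by positivity
  set Cπ := M * Cρ / η with hCπ
  have hCπ0 : 0 ≤ Cπ := by positivity
  set Cσ₁ := M ^ 2 * Cρ / (η * η) with hCσ₁
  have hCσ₁0 : 0 ≤ Cσ₁ := by positivity
  set δ := ε ^ 2 / (8 * M ^ 4) with hδ
  have hδ0 : 0 < δ := by positivity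
  set Cσ₀ := 2 * (M * (Cπ * M + M * Cπ + M * Cρ)) / δ with hCσ₀
  have hCσ₀0 : 0 ≤ Cσ₀ := by positivity
  -- bound on ρ
  have hρb : ∀ n : ℤ, |ρ n| ≤ Cρ := by
    intro n
    obtain ⟨k, hk | hk⟩ := Int.even_or_odd' n
    · rw [hk, hρe k, abs_div]
      refine div_le_div₀ (by positivity) ?_ hε (habsD k)
      rw [abs_mul, sq]
      exact mul_le_mul (hbr _) (hbr _) (abs_nonneg _) hM0.le
    · rw [hk, hρo k, abs_zero]; exact hCρ0
  -- bound on π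
  have hπb : ∀ n : ℤ, |π n| ≤ Cπ := by
    intro n
    obtain ⟨k, hk | hk⟩ := Int.even_or_odd' n
    · rw [hk, hπe k, abs_div, abs_neg, abs_mul]
      have hr : η ≤ |r (2 * k - 1)| := by
        have := hrabs (k - 1)
        have h2 : (2 * (k - 1) + 1 : ℤ) = 2 * k - 1 := by ring
        rwa [h2] at this
      exact div_le_div₀ (by positivity) (mul_le_mul (hbp _) (hρb _) (abs_nonneg _) hM0.le) hη hr
    · rw [hk, hπo k, abs_div, abs_neg, abs_mul]
      have hr : η ≤ |r (2 * k + 3)| := by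
        have := hrabs (k + 1)
        have h2 : (2 * (k + 1) + 1 : ℤ) = 2 * k + 3 := by ring
        rwa [h2] at this
      exact div_le_div₀ (by positivity) (mul_le_mul (hbp _) (hρb _) (abs_nonneg _) hM0.le) hη hr
  -- bound on σ odd
  have hσob : ∀ k : ℤ, |σ (2 * k + 1)| ≤ Cσ₁ := by
    intro k
    rw [hσo k, abs_div]
    have hr3 : η ≤ |r (2 * k + 3)| := by
      have := hrabs (k + 1)
      have h2 : (2 * (k + 1) + 1 : ℤ) = 2 * k + 3 := by ring
      rwa [h2] at this
    refine div_le_div₀ (by positivity) ?_ (by positivity) ?_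
    · rw [abs_mul, abs_mul, sq]
      exact mul_le_mul (mul_le_mul (hbp _) (hbp _) (abs_nonneg _) hM0.le) (hρb _)
        (abs_nonneg _) (by positivity)
    · rw [abs_mul]
      exact mul_le_mul (hrabs k) hr3 hη.le (abs_nonneg _)
  -- lower bound on p² + p²
  have hδb : ∀ k : ℤ, δ ≤ p (2 * k) ^ 2 + p (2 * k + 1) ^ 2 := by
    intro k
    have hq' : |q (2 * k - 1)| ≤ M := by
      have := hbq (k - 1)
      have h2 : (2 * (k - 1) + 1 : ℤ) = 2 * k - 1 := by ring
      rwa [h2] at this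
    have e1 : |q (2 * k - 1) * p (2 * k - 2) * p (2 * k + 1)| ≤ M * M * |p (2 * k + 1)| := by
      rw [abs_mul, abs_mul]
      exact mul_le_mul (mul_le_mul hq' (hbp _) (abs_nonneg _) hM0.le) le_rfl
        (abs_nonneg _) (by positivity)
    have e2 : |p (2 * k - 2) * p (2 * k) * r (2 * k + 1)| ≤ M * |p (2 * k)| * M := by
      rw [abs_mul, abs_mul]
      exact mul_le_mul (mul_le_mul (hbp _) le_rfl (abs_nonneg _) hM0.le) (hbr _)
        (abs_nonneg _) (by positivity)
    have e3 : |p (2 * k - 1) * p (2 * k + 1) * r (2 * k - 1)| ≤ M * |p (2 * k + 1)| * M := by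
      rw [abs_mul, abs_mul]
      exact mul_le_mul (mul_le_mul (hbp _) le_rfl (abs_nonneg _) hM0.le) (hbr _)
        (abs_nonneg _) (by positivity)
    have tri : |D k| ≤ |q (2 * k - 1) * p (2 * k - 2) * p (2 * k + 1)|
        + |p (2 * k - 2) * p (2 * k) * r (2 * k + 1)|
        + |p (2 * k - 1) * p (2 * k + 1) * r (2 * k - 1)| := by
      rw [hD k]
      have h1 := habs_sub (q (2 * k - 1) * p (2 * k - 2) * p (2 * k + 1)
        - p (2 * k - 2) * p (2 * k) * r (2 * k + 1)) (p (2 * k - 1) * p (2 * k + 1) * r (2 * k - 1))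
      have h2 := habs_sub (q (2 * k - 1) * p (2 * k - 2) * p (2 * k + 1))
        (p (2 * k - 2) * p (2 * k) * r (2 * k + 1))
      linarith
    have hsum : ε ≤ 2 * M ^ 2 * (|p (2 * k)| + |p (2 * k + 1)|) := by
      have := habsD k
      nlinarith [abs_nonneg (p (2 * k)), abs_nonneg (p (2 * k + 1))]
    rw [hδ, div_le_iff₀ (by positivity), ← sq_abs (p (2 * k)), ← sq_abs (p (2 * k + 1))]
    have hsq := mul_self_le_mul_self hε.le hsum
    nlinarith [mul_nonneg (by positivity : (0:ℝ) ≤ M ^ 4)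
      (sq_nonneg (|p (2 * k)| - |p (2 * k + 1)|))]
  -- bound on σ even
  have hσeb : ∀ k : ℤ, |σ (2 * k)| ≤ Cσ₀ := by
    intro k
    have hq1 : |q (2 * k - 1)| ≤ M := by
      have := hbq (k - 1)
      have h2 : (2 * (k - 1) + 1 : ℤ) = 2 * k - 1 := by ring
      rwa [h2] at this
    have hq2 : |q (2 * k + 1)| ≤ M := hbq k
    have inner1 : |π (2 * k + 1) * r (2 * k + 1) + q (2 * k - 1) * π (2 * k)
        + p (2 * k - 1) * ρ (2 * k)| ≤ Cπ * M + M * Cπ + M * Cρ := by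
      refine (abs_add_le _ _).trans (add_le_add ((abs_add_le _ _).trans (add_le_add ?_ ?_)) ?_)
      · rw [abs_mul]; exact mul_le_mul (hπb _) (hbr _) (abs_nonneg _) hCπ0
      · rw [abs_mul]; exact mul_le_mul hq1 (hπb _) (abs_nonneg _) hM0.le
      · rw [abs_mul]; exact mul_le_mul (hbp _) (hρb _) (abs_nonneg _) hM0.le
    have inner2 : |π (2 * k) * r (2 * k + 1) + q (2 * k + 1) * π (2 * k + 1)
        + p (2 * k + 2) * ρ (2 * k + 2)| ≤ Cπ * M + M * Cπ + M * Cρ := by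
      refine (abs_add_le _ _).trans (add_le_add ((abs_add_le _ _).trans (add_le_add ?_ ?_)) ?_)
      · rw [abs_mul]; exact mul_le_mul (hπb _) (hbr _) (abs_nonneg _) hCπ0
      · rw [abs_mul]; exact mul_le_mul hq2 (hπb _) (abs_nonneg _) hM0.le
      · rw [abs_mul]; exact mul_le_mul (hbp _) (hρb _) (abs_nonneg _) hM0.le
    have hden : δ ≤ |p (2 * k) ^ 2 + p (2 * k + 1) ^ 2| :=
      (hδb k).trans (le_abs_self _)
    rw [hσe k, abs_div, abs_neg]
    refine div_le_div₀ (by positivity) ?_ hδ0 hden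
    refine (abs_add_le _ _).trans ?_
    have g1 : |p (2 * k) * (π (2 * k + 1) * r (2 * k + 1) + q (2 * k - 1) * π (2 * k)
        + p (2 * k - 1) * ρ (2 * k))| ≤ M * (Cπ * M + M * Cπ + M * Cρ) := by
      rw [abs_mul]
      exact mul_le_mul (hbp _) inner1 (abs_nonneg _) hM0.le
    have g2 : |p (2 * k + 1) * (π (2 * k) * r (2 * k + 1) + q (2 * k + 1) * π (2 * k + 1)
        + p (2 * k + 2) * ρ (2 * k + 2))| ≤ M * (Cπ * M + M * Cπ + M * Cρ) := by
      rw [abs_mul]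
      exact mul_le_mul (hbp _) inner2 (abs_nonneg _) hM0.le
    linarith
  have hσb : ∀ n : ℤ, |σ n| ≤ Cσ₁ + Cσ₀ := by
    intro n
    obtain ⟨k, hk | hk⟩ := Int.even_or_odd' n
    · rw [hk]; exact (hσeb k).trans (by linarith)
    · rw [hk]; exact (hσob k).trans (by linarith)
  -- total constant
  set Ct := Cρ + Cπ + (Cσ₁ + Cσ₀) + 1 with hCt
  have hCt0 : 0 < Ct := by positivity
  have hc1 : ∀ n : ℤ, |ρ n| ≤ Ct := fun n => (hρb n).trans (by simp [hCt]; linarith)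
  have hc2 : ∀ n : ℤ, |π n| ≤ Ct := fun n => (hπb n).trans (by simp [hCt]; linarith)
  have hc3 : ∀ n : ℤ, |σ n| ≤ Ct := fun n => (hσb n).trans (by simp [hCt]; linarith)
  refine ⟨Ct, hCt0, fun n => ⟨hc1 n, hc2 n, hc3 n⟩, ?_⟩
  intro B hB
  refine ContinuousLinearMap.opNorm_le_bound B (by positivity) fun f => ?_
  have hc4 : ∀ n : ℤ, |π (n + 1)| ≤ Ct := fun n => hc2 (n + 1)
  have hc5 : ∀ n : ℤ, |ρ (n + 2)| ≤ Ct := fun n => hc1 (n + 2)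
  set g1 : lp (fun _ : ℤ => ℂ) 2 :=
    ⟨fun n => ((ρ n : ℝ) : ℂ) * f (n + (-2)), smp_aux_mem f ρ Ct hc1 (-2)⟩ with hg1
  set g2 : lp (fun _ : ℤ => ℂ) 2 :=
    ⟨fun n => ((π n : ℝ) : ℂ) * f (n + (-1)), smp_aux_mem f π Ct hc2 (-1)⟩ with hg2
  set g3 : lp (fun _ : ℤ => ℂ) 2 :=
    ⟨fun n => ((σ n : ℝ) : ℂ) * f (n + 0), smp_aux_mem f σ Ct hc3 0⟩ with hg3
  set g4 : lp (fun _ : ℤ => ℂ) 2 :=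
    ⟨fun n => ((π (n + 1) : ℝ) : ℂ) * f (n + 1),
      smp_aux_mem f (fun n => π (n + 1)) Ct hc4 1⟩ with hg4
  set g5 : lp (fun _ : ℤ => ℂ) 2 :=
    ⟨fun n => ((ρ (n + 2) : ℝ) : ℂ) * f (n + 2),
      smp_aux_mem f (fun n => ρ (n + 2)) Ct hc5 2⟩ with hg5
  have hBf : B f = g1 + g2 + g3 + g4 + g5 := by
    apply lp.ext
    funext n
    have hn := hB f n
    simp only [lp.coeFn_add, Pi.add_apply]
    rw [hn]
    show _ = ((ρ n : ℝ) : ℂ) * f (n + (-2)) + ((π n : ℝ) : ℂ) * f (n + (-1))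
      + ((σ n : ℝ) : ℂ) * f (n + 0) + ((π (n + 1) : ℝ) : ℂ) * f (n + 1)
      + ((ρ (n + 2) : ℝ) : ℂ) * f (n + 2)
    rw [show (n : ℤ) + -2 = n - 2 from by ring, show (n : ℤ) + -1 = n - 1 from by ring,
      add_zero]
  have n1 : ‖g1‖ ≤ Ct * ‖f‖ := smp_aux_norm f ρ Ct hc1 (-2) g1 fun n => rfl
  have n2 : ‖g2‖ ≤ Ct * ‖f‖ := smp_aux_norm f π Ct hc2 (-1) g2 fun n => rfl
  have n3 : ‖g3‖ ≤ Ct * ‖f‖ := smp_aux_norm f σ Ct hc3 0 g3 fun n => rfl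
  have n4 : ‖g4‖ ≤ Ct * ‖f‖ :=
    smp_aux_norm f (fun n => π (n + 1)) Ct hc4 1 g4 fun n => rfl
  have n5 : ‖g5‖ ≤ Ct * ‖f‖ :=
    smp_aux_norm f (fun n => ρ (n + 2)) Ct hc5 2 g5 fun n => rfl
  calc ‖B f‖ = ‖g1 + g2 + g3 + g4 + g5‖ := by rw [hBf]
    _ ≤ ‖g1 + g2 + g3 + g4‖ + ‖g5‖ := norm_add_le _ _
    _ ≤ (‖g1 + g2 + g3‖ + ‖g4‖) + ‖g5‖ := add_le_add_left (norm_add_le _ _) _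
    _ ≤ ((‖g1 + g2‖ + ‖g3‖) + ‖g4‖) + ‖g5‖ :=
        by linarith [norm_add_le (g1 + g2) g3]
    _ ≤ (((‖g1‖ + ‖g2‖) + ‖g3‖) + ‖g4‖) + ‖g5‖ :=
        by linarith [norm_add_le g1 g2]
    _ ≤ 5 * Ct * ‖f‖ := by linarith
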